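/- Let J be a symmetric negative definite matrix. Among all pairs (M, λ) with M symmetric positive definite, λ > 0, and MJ + JM ⪯ −2λM, the quantity χ(M)/λ, where χ(M) = √(λ_max(M)/λ_min(M)), is minimized by M = I with λ = −λ_max(J), i.e., χ(M)/λ ≥ 1/(−λ_max(J)) for all admissible (M, λ). -/

import Mathlib

open scoped Matrix
open Matrix

theorem identity_metric_minimizes_stability_bound {m : ℕ} [NeZero m]
    (J : Matrix (Fin m) (Fin m) ℝ) (hJ : J.IsHermitian) (hJneg : (-J).PosDef)
    (M : Matrix (Fin m) (Fin m) ℝ) (hM : M.PosDef) (lam : ℝ) (hlam : 0 < lam)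
    (hcontr : (-(2 * lam) • M - (M * J + J * M)).PosSemidef) :
    1 / (-(⨆ i, hJ.eigenvalues i)) ≤
      Real.sqrt ((⨆ i, hM.1.eigenvalues i) / (⨅ i, hM.1.eigenvalues i)) / lam := by
  -- pick index achieving sup of eigenvalues of J
  obtain ⟨i₀, hi₀⟩ := Finite.exists_max hJ.eigenvalues
  have hsup : (⨆ i, hJ.eigenvalues i) = hJ.eigenvalues i₀ :=
    le_antisymm (ciSup_le hi₀) (le_ciSup (Set.finite_range _).bddAbove i₀)
  set v : Fin m → ℝ := ⇑(hJ.eigenvectorBasis i₀) with hv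
  have hJv : J *ᵥ v = hJ.eigenvalues i₀ • v := hJ.mulVec_eigenvectorBasis i₀
  have hvne : v ≠ 0 := by
    have h1 := hJ.eigenvectorBasis.orthonormal.1 i₀
    intro h
    rw [show (hJ.eigenvectorBasis i₀ : EuclideanSpace ℝ (Fin m)) = 0 from by ext j; exact congrFun h j] at h1
    simp at h1
  have hq : 0 < v ⬝ᵥ (M *ᵥ v) := by simpa using hM.dotProduct_mulVec_pos hvne
  have hkey := hcontr.dotProduct_mulVec_nonneg v
  -- compute
  have e1 : v ⬝ᵥ ((M * J) *ᵥ v) = hJ.eigenvalues i₀ * v ⬝ᵥ (M *ᵥ v) := by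
    rw [← mulVec_mulVec, hJv, mulVec_smul, dotProduct_smul, smul_eq_mul]
  have e2 : v ⬝ᵥ ((J * M) *ᵥ v) = hJ.eigenvalues i₀ * v ⬝ᵥ (M *ᵥ v) := by
    have hJt : Jᵀ = J := by
      have := hJ.eq; simpa [Matrix.conjTranspose_eq_transpose_of_trivial] using this
    have hvJ : v ᵥ* J = hJ.eigenvalues i₀ • v := by
      calc v ᵥ* J = v ᵥ* (Jᵀ)ᵀ := by rw [transpose_transpose]
      _ = Jᵀ *ᵥ v := vecMul_transpose ..
      _ = J *ᵥ v := by rw [hJt]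
      _ = _ := hJv
    rw [← mulVec_mulVec, dotProduct_mulVec, hvJ, smul_dotProduct, smul_eq_mul]
  have hlle : lam ≤ -(hJ.eigenvalues i₀) := by
    simp only [star_trivial, sub_mulVec, add_mulVec, smul_mulVec, dotProduct_sub,
      dotProduct_add, dotProduct_smul, e1, e2, smul_eq_mul] at hkey
    nlinarith
  -- chi ≥ 1
  obtain ⟨jmax, hjmax⟩ := Finite.exists_max hM.1.eigenvalues
  obtain ⟨jmin, hjmin⟩ := Finite.exists_min hM.1.eigenvalues
  have hMsup : (⨆ i, hM.1.eigenvalues i) = hM.1.eigenvalues jmax :=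
    le_antisymm (ciSup_le hjmax) (le_ciSup (Set.finite_range _).bddAbove jmax)
  have hMinf : (⨅ i, hM.1.eigenvalues i) = hM.1.eigenvalues jmin :=
    le_antisymm (ciInf_le (Set.finite_range _).bddBelow jmin) (le_ciInf hjmin)
  have hminpos : 0 < hM.1.eigenvalues jmin := hM.eigenvalues_pos jmin
  have hchi : 1 ≤ Real.sqrt ((⨆ i, hM.1.eigenvalues i) / (⨅ i, hM.1.eigenvalues i)) := by
    rw [hMsup, hMinf]
    have : (1:ℝ) ≤ hM.1.eigenvalues jmax / hM.1.eigenvalues jmin :=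
      (one_le_div hminpos).2 (hjmin jmax)
    calc (1:ℝ) = Real.sqrt 1 := Real.sqrt_one.symm
    _ ≤ _ := Real.sqrt_le_sqrt this
  rw [hsup]
  have hpos : 0 < -(hJ.eigenvalues i₀) := lt_of_lt_of_le hlam hlle
  calc 1 / (-(hJ.eigenvalues i₀)) ≤ 1 / lam := by
        apply one_div_le_one_div_of_le hlam hlle
    _ ≤ _ := by
        rw [div_le_div_iff₀ hlam hlam] at *
        nlinarith
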